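/- If G is a group in which there exists an element x whose cyclic subgroup ⟨x⟩ is 2-subnormal in G (i.e. ⟨x⟩ is normal in its normal closure ⟨x^G⟩), then the normal closure ⟨x^G⟩ of x in G is nilpotent of class at most 2. -/

import Mathlib

open Subgroup

/-- Conjugation by any element of the normal closure sends any conjugate of `x`
to a power of itself. -/
private lemma aux_conj_pow {G : Type*} [Group G] (x : G)
    (h : ((Subgroup.zpowers x).subgroupOf (Subgroup.normalClosure {x})).Normal)
    (a : G) (ha : a ∈ Subgroup.normalClosure {x}) (g : G) :
    ∃ k : ℤ, a * (g * x * g⁻¹) * a⁻¹ = (g * x * g⁻¹) ^ k := by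
  haveI : (Subgroup.normalClosure ({x} : Set G)).Normal := Subgroup.normalClosure_normal
  have hx : x ∈ Subgroup.normalClosure ({x} : Set G) :=
    Subgroup.subset_normalClosure rfl
  have ha' : g⁻¹ * a * g ∈ Subgroup.normalClosure ({x} : Set G) := by
    have := (Subgroup.normalClosure_normal (s := ({x} : Set G))).conj_mem a ha g⁻¹
    simpa using this
  have hxmem : (⟨x, hx⟩ : ↥(Subgroup.normalClosure ({x} : Set G))) ∈
      (Subgroup.zpowers x).subgroupOf (Subgroup.normalClosure {x}) := by
    simp [Subgroup.mem_subgroupOf]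
  have hconj := h.conj_mem ⟨x, hx⟩ hxmem ⟨g⁻¹ * a * g, ha'⟩
  rw [Subgroup.mem_subgroupOf] at hconj
  simp only [Subgroup.coe_mul, Subgroup.coe_inv, Subgroup.mem_zpowers_iff] at hconj
  obtain ⟨k, hk⟩ := hconj
  refine ⟨k, ?_⟩
  rw [conj_zpow, hk]
  group

theorem stmt_0 {G : Type*} [Group G] (x : G)
    (h : ((Subgroup.zpowers x).subgroupOf (Subgroup.normalClosure {x})).Normal) :
    (⊤ : Subgroup ↥(Subgroup.normalClosure {x})).lowerCentralSeries 2 = ⊥ := by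
  set N := Subgroup.normalClosure ({x} : Set G) with hN
  haveI : N.Normal := Subgroup.normalClosure_normal
  -- Step 1: every commutator of elements of N commutes with every conjugate of x.
  have key : ∀ a b : G, a ∈ N → b ∈ N → ∀ g : G,
      (a * b * a⁻¹ * b⁻¹) * (g * x * g⁻¹) = (g * x * g⁻¹) * (a * b * a⁻¹ * b⁻¹) := by
    intro a b ha hb g
    set y := g * x * g⁻¹ with hy
    obtain ⟨k, hk⟩ := aux_conj_pow x h a ha g
    obtain ⟨m, hm⟩ := aux_conj_pow x h b hb g
    obtain ⟨j, hj⟩ := aux_conj_pow x h (b * a)⁻¹ (inv_mem (mul_mem hb ha)) g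
    rw [← hy] at hk hm hj
    have hab : (a * b) * y * (a * b)⁻¹ = y ^ (k * m) := by
      have h1 : (a * b) * y * (a * b)⁻¹ = a * (b * y * b⁻¹) * a⁻¹ := by group
      rw [h1, hm, ← conj_zpow, hk, ← zpow_mul]
    have hba : (b * a) * y * (b * a)⁻¹ = y ^ (m * k) := by
      have h1 : (b * a) * y * (b * a)⁻¹ = b * (a * y * a⁻¹) * b⁻¹ := by group
      rw [h1, hk, ← conj_zpow, hm, ← zpow_mul]
    have hyj : (b * a) * y ^ j * (b * a)⁻¹ = y := by
      rw [← hj]; group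
    have hfix : y ^ (m * k * j) = y := by
      rw [zpow_mul, ← hba, conj_zpow, hyj]
    have final : (a * b * a⁻¹ * b⁻¹) * y * (a * b * a⁻¹ * b⁻¹)⁻¹ = y := by
      have h1 : (a * b * a⁻¹ * b⁻¹) * y * (a * b * a⁻¹ * b⁻¹)⁻¹ =
          (a * b) * ((b * a)⁻¹ * y * ((b * a)⁻¹)⁻¹) * (a * b)⁻¹ := by group
      rw [h1, hj, ← conj_zpow, hab, ← zpow_mul, show k * m = m * k from mul_comm k m, hfix]
    rw [mul_inv_eq_iff_eq_mul] at final
    exact final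
  -- Step 2: commutators of elements of N centralize all of N.
  have hcen : ∀ a b : ↥N, ∀ n : ↥N, (n : G) * ((a : G) * b * (a : G)⁻¹ * (b : G)⁻¹)
      = ((a : G) * b * (a : G)⁻¹ * (b : G)⁻¹) * n := by
    intro a b n
    set c : G := (a : G) * b * (a : G)⁻¹ * (b : G)⁻¹ with hc
    have hle : N ≤ Subgroup.centralizer {c} := by
      have hsub : Group.conjugatesOfSet ({x} : Set G) ⊆ ↑(Subgroup.centralizer {c}) := by
        intro y hy
        rw [Group.mem_conjugatesOfSet_iff] at hy
        obtain ⟨x', hx', hconj⟩ := hy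
        rw [Set.mem_singleton_iff] at hx'
        subst hx'
        rw [isConj_iff] at hconj
        obtain ⟨g, hg⟩ := hconj
        rw [SetLike.mem_coe, Subgroup.mem_centralizer_iff]
        intro z hz
        rw [Set.mem_singleton_iff] at hz
        subst hz
        rw [← hg]
        exact key a b a.2 b.2 g
      exact (Subgroup.closure_le _).mpr hsub
    have := hle n.2
    rw [Subgroup.mem_centralizer_iff] at this
    exact (this c rfl).symm
  -- Step 3: assemble.
  apply Subgroup.lowerCentralSeries_succ_eq_bot
  rw [Subgroup.top_lowerCentralSeries_one, commutator_def, Subgroup.commutator_le]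
  intro a _ b _
  rw [Subgroup.mem_center_iff]
  intro z
  ext
  push_cast [commutatorElement_def]
  exact hcen a b z
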